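/- Let λ, δ, τ, μ, ω, M_p be positive real numbers and set R₀ = λτ/(δμ). The system of equations λ = δV + τVQ/(1 + ωM_pQ), μ = τV/(1 + ωM_pQ) in unknowns (V, Q) has exactly one solution with Q ≠ 0, namely V = (μ + λωM_p)/(τ + δωM_p) and Q = (R₀ − 1)/(τ/δ + ωM_p); moreover this Q is positive if and only if R₀ > 1. -/

import Mathlib

theorem stmt_0 (lam del tau mu om Mp : ℝ)
    (hlam : 0 < lam) (hdel : 0 < del) (htau : 0 < tau) (hmu : 0 < mu)
    (hom : 0 < om) (hMp : 0 < Mp)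
    (R0 Vinf Qinf : ℝ)
    (hR0 : R0 = lam * tau / (del * mu))
    (hV : Vinf = (mu + lam * om * Mp) / (tau + del * om * Mp))
    (hQ : Qinf = (R0 - 1) / (tau / del + om * Mp)) :
    (lam = del * Vinf + tau * Vinf * Qinf / (1 + om * Mp * Qinf) ∧
      mu = tau * Vinf / (1 + om * Mp * Qinf)) ∧
    (∀ V Q : ℝ, Q ≠ 0 →
      lam = del * V + tau * V * Q / (1 + om * Mp * Q) →
      mu = tau * V / (1 + om * Mp * Q) →
      V = Vinf ∧ Q = Qinf) ∧
    (0 < Qinf ↔ 1 < R0) := by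
  have hA : 0 < tau + del * om * Mp := by positivity
  have hA' : tau + del * om * Mp ≠ 0 := ne_of_gt hA
  have hQ' : Qinf = (lam * tau - del * mu) / (mu * (tau + del * om * Mp)) := by
    rw [hQ, hR0]
    field_simp
  have hD : 1 + om * Mp * Qinf = tau * (mu + om * Mp * lam) / (mu * (tau + del * om * Mp)) := by
    rw [hQ']
    field_simp
    ring
  have hDpos : 0 < 1 + om * Mp * Qinf := by rw [hD]; positivity
  have hDne : (1 + om * Mp * Qinf) ≠ 0 := ne_of_gt hDpos
  refine ⟨⟨?_, ?_⟩, ?_, ?_⟩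
  · rw [hV, hD, hQ']
    field_simp
    ring
  · rw [hV, hD]
    field_simp
  · intro V Q _ heq1 heq2
    have hDne2 : (1 + om * Mp * Q) ≠ 0 := by
      intro h
      rw [h, div_zero] at heq2
      exact absurd heq2 (ne_of_gt hmu)
    have key : tau * V * Q / (1 + om * Mp * Q) = mu * Q := by
      rw [heq2]; ring
    rw [key] at heq1
    -- heq1 : lam = del * V + mu * Q
    have heq2' : tau * V = mu * (1 + om * Mp * Q) := by
      field_simp at heq2
      linarith [heq2]
    -- tau V = mu + om Mp * (mu Q) = mu + om Mp (lam - del V)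
    have hVeq : V * (tau + del * om * Mp) = mu + om * Mp * lam := by nlinarith [heq1, heq2']
    have hV' : V = Vinf := by
      rw [hV]
      field_simp
      linarith [hVeq]
    refine ⟨hV', ?_⟩
    have hmQ : mu * Q = lam - del * V := by linarith [heq1]
    rw [hV'] at hmQ
    rw [hV] at hmQ
    have : Q = Qinf := by
      rw [hQ']
      field_simp at hmQ ⊢
      nlinarith [hmQ]
    exact this
  · rw [hQ']
    constructor
    · intro h
      rw [hR0]
      rw [div_pos_iff] at h
      rcases h with ⟨h1, _⟩ | ⟨_, h2⟩
      · rw [lt_div_iff₀ (by positivity)]; linarith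
      · exfalso; nlinarith
    · intro h
      rw [hR0, lt_div_iff₀ (by positivity)] at h
      apply div_pos (by linarith)
      positivity
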